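/- With G as defined (bump-modified identity around the points ζ_i with parameters α_i and ν < min{min_i 1/(8|α_i|), min_i (ζ_{i+1}−ζ_i)/2}), one has inf_{x∈ℝ} G'(x) > 0, and there exists c ∈ (0,∞) such that G'(x) = 1 for all |x| > c. -/

import Mathlib

/-- The bump function used for the transformation `G`. -/
noncomputable def bump (u : ℝ) : ℝ := if |u| ≤ 1 then (1 - u ^ 2) ^ 4 else 0

/-- The transformation `G` built from the bump function. -/
noncomputable def Gtrans {m : ℕ} (ζ α : Fin m → ℝ) (ν : ℝ) (x : ℝ) : ℝ :=
  x + ∑ i, α i * bump ((x - ζ i) / ν) * ((x - ζ i) * |x - ζ i|)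

lemma hasDerivAt_mul_abs (t : ℝ) : HasDerivAt (fun s : ℝ => s * |s|) (2 * |t|) t := by
  rcases lt_trichotomy t 0 with ht | rfl | ht
  · have h2 : HasDerivAt (fun s : ℝ => -(s * s)) (2 * |t|) t := by
      have h := ((hasDerivAt_id t).fun_mul (hasDerivAt_id t)).fun_neg
      simp only [id] at h
      refine h.congr_deriv ?_
      rw [abs_of_neg ht]; ring
    apply h2.congr_of_eventuallyEq
    filter_upwards [Iio_mem_nhds ht] with s hs
    rw [abs_of_neg hs]; ring
  · rw [hasDerivAt_iff_tendsto_slope]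
    have habs : Filter.Tendsto (fun s : ℝ => |s|) (nhdsWithin 0 {(0:ℝ)}ᶜ)
        (nhds (2 * |(0:ℝ)|)) := by
      have h := (continuous_abs.tendsto (0:ℝ)).mono_left
        (nhdsWithin_le_nhds (s := {(0:ℝ)}ᶜ))
      simpa using h
    refine habs.congr' ?_
    filter_upwards [self_mem_nhdsWithin] with s hs
    have hs0 : (s : ℝ) ≠ 0 := hs
    rw [slope_def_field]; field_simp; ring
  · have h2 : HasDerivAt (fun s : ℝ => s * s) (2 * |t|) t := by
      have h := (hasDerivAt_id t).fun_mul (hasDerivAt_id t)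
      simp only [id] at h
      refine h.congr_deriv ?_
      rw [abs_of_pos ht]; ring
    apply h2.congr_of_eventuallyEq
    filter_upwards [Ioi_mem_nhds ht] with s hs
    rw [abs_of_pos hs]


noncomputable def qq (u : ℝ) : ℝ := max (1 - u ^ 2) 0

noncomputable def Q2 (u : ℝ) : ℝ := ((1 - u ^ 2) ^ 2 + (1 - u ^ 2) * |1 - u ^ 2|) / 2

lemma Q2_eq (u : ℝ) : Q2 u = qq u ^ 2 := by
  unfold Q2 qq
  rcases le_or_gt 0 (1 - u ^ 2) with h | h
  · rw [abs_of_nonneg h, max_eq_left h]; ring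
  · rw [abs_of_neg h, max_eq_right h.le]; ring

lemma hasDerivAt_Q2 (u : ℝ) : HasDerivAt Q2 (-4 * u * qq u) u := by
  have hin : HasDerivAt (fun u : ℝ => 1 - u ^ 2) (-2 * u) u := by
    have := ((hasDerivAt_pow 2 u).const_sub 1)
    simpa using this.congr_deriv (by ring)
  have h1 : HasDerivAt (fun u : ℝ => (1 - u ^ 2) * |1 - u ^ 2|)
      (2 * |1 - u ^ 2| * (-2 * u)) u :=
    HasDerivAt.comp (h₂ := fun s : ℝ => s * |s|) u (hasDerivAt_mul_abs (1 - u ^ 2)) hin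
  have h2 : HasDerivAt (fun u : ℝ => (1 - u ^ 2) ^ 2) (2 * (1 - u ^ 2) * (-2 * u)) u := by
    have := (hasDerivAt_pow 2 (1 - u ^ 2)).comp u hin
    simpa [Function.comp_def] using this.congr_deriv (by ring)
  have := (h2.add h1).div_const 2
  refine this.congr_deriv ?_
  rcases le_or_gt 0 (1 - u ^ 2) with h | h
  · rw [abs_of_nonneg h]; unfold qq; rw [max_eq_left h]; ring
  · rw [abs_of_neg h]; unfold qq; rw [max_eq_right h.le]; ring

noncomputable def gg (u : ℝ) : ℝ := Q2 u * u

noncomputable def ff (u : ℝ) : ℝ := gg u * |gg u|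

noncomputable def ffd (u : ℝ) : ℝ := 2 * |gg u| * (-4 * u * qq u * u + Q2 u)

lemma hasDerivAt_gg (u : ℝ) : HasDerivAt gg (-4 * u * qq u * u + Q2 u) u := by
  have := (hasDerivAt_Q2 u).fun_mul (hasDerivAt_id u)
  simp only [id, mul_one] at this
  exact this

lemma hasDerivAt_ff (u : ℝ) : HasDerivAt ff (ffd u) u :=
  (hasDerivAt_mul_abs (gg u)).comp u (hasDerivAt_gg u)

lemma Q2_nonneg (u : ℝ) : 0 ≤ Q2 u := by rw [Q2_eq]; positivity

lemma qq_eq_zero {u : ℝ} (h : 1 ≤ |u|) : qq u = 0 := by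
  unfold qq
  have : 1 ≤ u ^ 2 := by nlinarith [abs_nonneg u, sq_abs u]
  rw [max_eq_right (by linarith)]

lemma ffd_eq_zero {u : ℝ} (h : 1 ≤ |u|) : ffd u = 0 := by
  have hq := qq_eq_zero h
  have hQ : Q2 u = 0 := by rw [Q2_eq, hq]; ring
  simp [ffd, gg, hq, hQ]

lemma abs_ffd_le (u : ℝ) : |ffd u| ≤ 6 := by
  rcases le_or_gt 1 |u| with h | h
  · rw [ffd_eq_zero h]; norm_num
  · have hq : qq u = 1 - u ^ 2 := by
      unfold qq; rw [max_eq_left]; nlinarith [sq_abs u, abs_nonneg u]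
    have hQ : Q2 u = (1 - u ^ 2) ^ 2 := by rw [Q2_eq, hq]
    have ha : |gg u| = (1 - u ^ 2) ^ 2 * |u| := by
      rw [gg, hQ, abs_mul, abs_of_nonneg (by positivity : (0:ℝ) ≤ (1 - u ^ 2) ^ 2)]
    have h1 : (0:ℝ) ≤ 1 - u ^ 2 := by nlinarith [sq_abs u, abs_nonneg u]
    have h2 : |u| ^ 2 = u ^ 2 := sq_abs u
    have h3 : 0 ≤ |u| := abs_nonneg u
    rw [ffd, ha, hq, hQ, abs_mul, abs_mul]
    rw [abs_of_nonneg (by norm_num : (0:ℝ) ≤ 2),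
      abs_of_nonneg (by positivity : (0:ℝ) ≤ (1 - u ^ 2) ^ 2 * |u|)]
    have habs : |(-4 * u * (1 - u ^ 2) * u + (1 - u ^ 2) ^ 2)| ≤
        4 * u ^ 2 * (1 - u ^ 2) + (1 - u ^ 2) ^ 2 := by
      rw [abs_le]; constructor <;> nlinarith
    calc 2 * ((1 - u ^ 2) ^ 2 * |u|) * |(-4 * u * (1 - u ^ 2) * u + (1 - u ^ 2) ^ 2)|
        ≤ 2 * ((1 - u ^ 2) ^ 2 * |u|) * (4 * u ^ 2 * (1 - u ^ 2) + (1 - u ^ 2) ^ 2) := by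
          apply mul_le_mul_of_nonneg_left habs (by positivity)
      _ = 2 * |u| * (1 + 3 * u ^ 2) * (1 - u ^ 2) ^ 3 := by ring
      _ ≤ 2 * |u| * (1 + 3 * u ^ 2) * (1 - u ^ 2) := by
            apply mul_le_mul_of_nonneg_left _ (by positivity)
            nlinarith [sq_nonneg (1 - u ^ 2), sq_nonneg u]
      _ ≤ 6 := by
            nlinarith [h3, h.le, h2, sq_nonneg u, mul_nonneg h3 (sq_nonneg u),
              mul_nonneg (mul_nonneg h3 (sq_nonneg u)) (sq_nonneg u)]

lemma bump_eq (u : ℝ) : bump u = qq u ^ 4 := by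
  unfold bump qq
  rcases le_or_gt |u| 1 with h | h
  · rw [if_pos h, max_eq_left (by nlinarith [sq_abs u, abs_nonneg u] : (0:ℝ) ≤ 1 - u ^ 2)]
  · rw [if_neg (not_le.mpr h),
      max_eq_right (by nlinarith [sq_abs u, abs_nonneg u] : 1 - u ^ 2 ≤ 0)]
    norm_num

lemma ff_eq (u : ℝ) : ff u = qq u ^ 4 * (u * |u|) := by
  have hg : |gg u| = Q2 u * |u| := by rw [gg, abs_mul, abs_of_nonneg (Q2_nonneg u)]
  rw [ff, hg, gg, Q2_eq]; ring

lemma term_eq {ν : ℝ} (hν : 0 < ν) (y : ℝ) :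
    bump (y / ν) * (y * |y|) = ν ^ 2 * ff (y / ν) := by
  have hy : y * |y| = ν ^ 2 * ((y / ν) * |y / ν|) := by
    rw [abs_div, abs_of_pos hν]
    field_simp
  rw [bump_eq, ff_eq, hy]; ring

lemma Gtrans_eq {m : ℕ} (ζ α : Fin m → ℝ) {ν : ℝ} (hν : 0 < ν) :
    Gtrans ζ α ν = fun x => x + ∑ i, α i * (ν ^ 2 * ff ((x - ζ i) / ν)) := by
  funext x
  unfold Gtrans
  congr 1
  refine Finset.sum_congr rfl fun i _ => ?_
  rw [mul_assoc, term_eq hν]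

lemma hasDerivAt_Gtrans {m : ℕ} (ζ α : Fin m → ℝ) {ν : ℝ} (hν : 0 < ν) (x : ℝ) :
    HasDerivAt (Gtrans ζ α ν)
      (1 + ∑ i, α i * ν * ffd ((x - ζ i) / ν)) x := by
  rw [Gtrans_eq ζ α hν]
  have hsum : HasDerivAt (fun x : ℝ => ∑ i, α i * (ν ^ 2 * ff ((x - ζ i) / ν)))
      (∑ i, α i * ν * ffd ((x - ζ i) / ν)) x := by
    refine HasDerivAt.fun_sum fun i _ => ?_
    have hin : HasDerivAt (fun x : ℝ => (x - ζ i) / ν) (1 / ν) x :=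
      ((hasDerivAt_id x).sub_const (ζ i)).div_const ν
    have hcomp := (hasDerivAt_ff ((x - ζ i) / ν)).comp x hin
    have := HasDerivAt.const_mul (α i) (HasDerivAt.const_mul (ν ^ 2) hcomp)
    refine this.congr_deriv ?_
    field_simp
  simpa using (hasDerivAt_id x).fun_add hsum

lemma deriv_Gtrans {m : ℕ} (ζ α : Fin m → ℝ) {ν : ℝ} (hν : 0 < ν) (x : ℝ) :
    deriv (Gtrans ζ α ν) x = 1 + ∑ i, α i * ν * ffd ((x - ζ i) / ν) :=
  (hasDerivAt_Gtrans ζ α hν x).deriv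

/-- `inf_x G'(x) > 0`, and `G' = 1` outside a compact set. -/
theorem stmt_13 (m : ℕ) (ζ α : Fin m → ℝ) (hζ : StrictMono ζ) (ν : ℝ) (hν : 0 < ν)
    (hν1 : ∀ i, 8 * |α i| * ν < 1)
    (hν2 : ∀ i : Fin m, ∀ h : i.val + 1 < m, 2 * ν < ζ ⟨i.val + 1, h⟩ - ζ i) :
    (∃ ε > (0 : ℝ), ∀ x, ε ≤ deriv (Gtrans ζ α ν) x) ∧
      ∃ c > (0 : ℝ), ∀ x : ℝ, c < |x| → deriv (Gtrans ζ α ν) x = 1 := by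
  -- notation for the summands of the derivative
  set t : Fin m → ℝ → ℝ := fun i x => α i * ν * ffd ((x - ζ i) / ν) with ht
  -- per-term bound
  have hterm : ∀ i x, |t i x| ≤ 3 / 4 := by
    intro i x
    have h1 : |t i x| = |α i| * ν * |ffd ((x - ζ i) / ν)| := by
      rw [ht]; simp [abs_mul, abs_of_pos hν]
    have h2 := abs_ffd_le ((x - ζ i) / ν)
    have h3 := hν1 i
    have h4 : 0 ≤ |α i| * ν := by positivity
    have h5 : |ffd ((x - ζ i) / ν)| ≥ 0 := abs_nonneg _
    calc |t i x| = |α i| * ν * |ffd ((x - ζ i) / ν)| := h1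
      _ ≤ |α i| * ν * 6 := by nlinarith
      _ ≤ 3 / 4 := by nlinarith
  -- nonzero term forces closeness to ζ i
  have hclose : ∀ i x, t i x ≠ 0 → |x - ζ i| < ν := by
    intro i x hne
    by_contra hge
    push_neg at hge
    have : (1 : ℝ) ≤ |(x - ζ i) / ν| := by
      rw [abs_div, abs_of_pos hν, le_div_iff₀ hν]
      linarith
    exact hne (by rw [ht]; simp [ffd_eq_zero this])
  -- separation: two distinct indices cannot both be close
  have hsep : ∀ (i j : Fin m) (x : ℝ), i ≠ j → |x - ζ i| < ν → |x - ζ j| < ν → False := by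
    have key : ∀ (i j : Fin m) (x : ℝ), i < j → |x - ζ i| < ν → |x - ζ j| < ν → False := by
      intro i j x hij hi hj
      have h1 : i.val + 1 < m := lt_of_le_of_lt (Nat.succ_le_of_lt hij) j.isLt
      have h2 := hν2 i h1
      have h3 : ζ ⟨i.val + 1, h1⟩ ≤ ζ j := hζ.monotone (by
        show (⟨i.val + 1, h1⟩ : Fin m) ≤ j
        exact Nat.succ_le_of_lt hij)
      rw [abs_lt] at hi hj
      linarith
    intro i j x hij hi hj
    rcases lt_or_gt_of_ne hij with h | h
    · exact key i j x h hi hj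
    · exact key j i x h hj hi
  -- bound on the full sum
  have hsum : ∀ x, |∑ i, t i x| ≤ 3 / 4 := by
    intro x
    by_cases hall : ∀ i, t i x = 0
    · rw [Finset.sum_eq_zero fun i _ => hall i]; norm_num
    · push_neg at hall
      obtain ⟨i₀, hi₀⟩ := hall
      have hz : ∀ j ∈ Finset.univ, j ≠ i₀ → t j x = 0 := by
        intro j _ hj
        by_contra hne
        exact hsep j i₀ x hj (hclose j x hne) (hclose i₀ x hi₀)
      rw [Finset.sum_eq_single i₀ hz fun h => absurd (Finset.mem_univ i₀) h]
      exact hterm i₀ x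
  constructor
  · refine ⟨1 / 4, by norm_num, fun x => ?_⟩
    rw [deriv_Gtrans ζ α hν x]
    have := hsum x
    have h := abs_le.mp this
    linarith [h.1]
  · refine ⟨1 + ν + ∑ i, (|ζ i| + ν), by positivity, fun x hx => ?_⟩
    rw [deriv_Gtrans ζ α hν x]
    have hzero : ∀ i : Fin m, t i x = 0 := by
      intro i
      have hle : |ζ i| + ν ≤ ∑ j, (|ζ j| + ν) :=
        Finset.single_le_sum (f := fun j => |ζ j| + ν)
          (fun j _ => by positivity) (Finset.mem_univ i)
      have h1 : ν ≤ |x - ζ i| := by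
        have := abs_sub_abs_le_abs_sub x (ζ i)
        linarith
      have h2 : (1 : ℝ) ≤ |(x - ζ i) / ν| := by
        rw [abs_div, abs_of_pos hν, le_div_iff₀ hν]
        linarith
      rw [ht]; simp [ffd_eq_zero h2]
    rw [Finset.sum_eq_zero fun i _ => hzero i]
    norm_num
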